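/- Define a family of permutations f(s, l, j) of the natural numbers, for s, l, j natural numbers, recursively by: f(0, l, j) = identity, and f(s+1, l, j) = f(s, l, j) if j < 2^s, while f(s+1, l, j) = f(s, l+2^s, j−2^s) ∘ swap(l, l+2^s) ∘ f(s, l+2^s, j−2^s) if j ≥ 2^s (applying the rightmost permutation first). Then for all s, l, j with j < 2^s, f(s, l, j) = swap(l, l+j), the transposition exchanging l and l+j (the identity when j = 0). This is the correctness of the recursive divide-and-conquer QRAM circuit: on address j it swaps the data cells at positions l and l+j and fixes all other cells. -/

import Mathlib

/-- The recursively defined divide-and-conquer QRAM permutation: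
`f(0,l,j) = id`; `f(s+1,l,j) = f(s,l,j)` if `j < 2^s`, and
`f(s+1,l,j) = f(s,l+2^s,j−2^s) ∘ swap(l,l+2^s) ∘ f(s,l+2^s,j−2^s)` otherwise
(the rightmost permutation applied first). -/
def qramPerm : ℕ → ℕ → ℕ → Equiv.Perm ℕ
  | 0, _, _ => 1
  | (s+1), l, j =>
      if j < 2^s then qramPerm s l j
      else qramPerm s (l + 2^s) (j - 2^s) * Equiv.swap l (l + 2^s) *
        qramPerm s (l + 2^s) (j - 2^s)

/-- correctness of the recursive divide-and-conquer QRAM circuit: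
for `j < 2^s`, `f(s,l,j)` is the transposition exchanging `l` and `l+j`
(the identity when `j = 0`). -/
theorem qramPerm_correct (s l j : ℕ) (hj : j < 2^s) :
    qramPerm s l j = Equiv.swap l (l + j) := by
  induction s generalizing l j with
  | zero =>
    interval_cases j
    simp [qramPerm, Equiv.swap_self]
    rfl
  | succ s ih =>
    rw [qramPerm]
    by_cases h : j < 2^s
    · rw [if_pos h, ih l j h]
    · rw [if_neg h]
      push_neg at h
      have hsub : j - 2^s < 2^s := by
        have : j < 2^s * 2 := by simpa [pow_succ] using hj
        omega
      rw [ih _ _ hsub]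
      have hadd : l + 2^s + (j - 2^s) = l + j := by omega
      rw [hadd]
      have key := (Equiv.swap_apply_apply (Equiv.swap (l + 2^s) (l + j)) l (l + 2^s)).symm
      have hpos : 0 < 2^s := Nat.pow_pos (by norm_num)
      have hl : Equiv.swap (l + 2^s) (l + j) l = l := by
        apply Equiv.swap_apply_of_ne_of_ne <;> omega
      have h2 : Equiv.swap (l + 2^s) (l + j) (l + 2^s) = l + j :=
        Equiv.swap_apply_left _ _
      rw [hl, h2] at key
      rw [← key, Equiv.swap_inv]
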